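/- Let p be a prime and let n ≥ k be natural numbers. Then, in ℚ_p, the sequence N ↦ (1/p^N) · ∑_{x=0}^{p^N − 1} C(n,k) x^k (1 − x)^{n−k} tends (as N → ∞) to the rational number C(n,k) · ∑_{j=0}^{k} C(k, j) (−1)^{k−j} · ∑_{l=0}^{n−j} C(n−j, l) (−1)^l B_l, cast into ℚ_p. (Equivalently, ∫_{ℤ_p} B_{k,n}(x) dμ₁(x) = ∫_{ℤ_p} B_{n−k,n}(1−x) dμ₁(x) = C(n,k) ∑_{j=0}^{k} C(k,j)(−1)^{k−j} ∑_{l=0}^{n−j} C(n−j,l)(−1)^l B_l.) -/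

import Mathlib

open Finset Filter

lemma volkenborn_monomial (p : ℕ) [Fact p.Prime] (m : ℕ) :
    Tendsto (fun N : ℕ => (1 / (p : ℚ_[p]) ^ N) * ∑ x ∈ range (p ^ N), (x : ℚ_[p]) ^ m)
      atTop (nhds ((bernoulli m : ℚ) : ℚ_[p])) := by
  have hp0 : ((p : ℚ_[p])) ≠ 0 := by
    exact_mod_cast Nat.cast_ne_zero.mpr (Fact.out : p.Prime).ne_zero
  have key : ∀ N : ℕ, (1 / (p : ℚ_[p]) ^ N) * ∑ x ∈ range (p ^ N), (x : ℚ_[p]) ^ m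
      = ∑ i ∈ range (m + 1),
          ((bernoulli i * ((m + 1).choose i) / (m + 1) : ℚ) : ℚ_[p]) * ((p : ℚ_[p]) ^ N) ^ (m - i) := by
    intro N
    have h1 : (∑ x ∈ range (p ^ N), (x : ℚ_[p]) ^ m)
        = ((∑ x ∈ range (p ^ N), (x : ℚ) ^ m : ℚ) : ℚ_[p]) := by push_cast; ring
    rw [h1, _root_.sum_range_pow]
    push_cast
    rw [Finset.mul_sum]
    refine Finset.sum_congr rfl fun i hi => ?_
    have hi' : i ≤ m := Nat.lt_succ_iff.mp (Finset.mem_range.mp hi)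
    have he : m + 1 - i = (m - i) + 1 := by omega
    rw [he]
    have hpN : ((p : ℚ_[p]) ^ N) ≠ 0 := pow_ne_zero _ hp0
    have hm1 : ((m : ℚ_[p]) + 1) ≠ 0 := Nat.cast_add_one_ne_zero m
    rw [pow_succ]
    field_simp
  rw [show ((bernoulli m : ℚ) : ℚ_[p]) = ∑ i ∈ range (m + 1),
      ((bernoulli i * ((m + 1).choose i) / (m + 1) : ℚ) : ℚ_[p]) * ((0 : ℚ_[p])) ^ (m - i) from ?_]
  · refine Tendsto.congr (fun N => (key N).symm) ?_
    refine tendsto_finset_sum _ fun i _ => ?_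
    refine Tendsto.const_mul _ (Tendsto.pow ?_ _)
    refine tendsto_pow_atTop_nhds_zero_of_norm_lt_one ?_
    rw [Padic.norm_p]
    have : (1:ℝ) < p := by exact_mod_cast (Fact.out : p.Prime).one_lt
    rw [inv_lt_one_iff₀]; right; exact this
  · rw [Finset.sum_range_succ]
    have : ∀ i ∈ range m, ((bernoulli i * ((m + 1).choose i) / (m + 1) : ℚ) : ℚ_[p]) * (0 : ℚ_[p]) ^ (m - i) = 0 := by
      intro i hi
      have : m - i ≠ 0 := by have := Finset.mem_range.mp hi; omega
      simp [zero_pow this]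
    rw [Finset.sum_eq_zero this]
    rw [Nat.sub_self, pow_zero, mul_one, zero_add]
    congr 1
    rw [Nat.choose_succ_self_right]
    have hm1 : ((m : ℚ) + 1) ≠ 0 := by positivity
    push_cast
    field_simp

lemma bernstein_expand {R : Type*} [CommRing R] (n k : ℕ) (hkn : k ≤ n) (x : R) :
    x ^ k * (1 - x) ^ (n - k) =
      ∑ j ∈ range (k + 1), (k.choose j : R) * (-1) ^ (k - j) *
        ∑ l ∈ range (n - j + 1), ((n - j).choose l : R) * (-1) ^ l * x ^ l := by
  have h2 : ∀ m : ℕ, (1 - x) ^ m = ∑ l ∈ range (m + 1), ((m.choose l : R) * (-1) ^ l * x ^ l) := by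
    intro m
    have h := add_pow (-x) 1 m
    rw [show (-x) + 1 = 1 - x by ring] at h
    rw [h]
    refine Finset.sum_congr rfl fun l _ => ?_
    rw [neg_pow]
    ring
  have hx : x ^ k = ∑ j ∈ range (k + 1), (-(1 - x)) ^ j * (1 : R) ^ (k - j) * (k.choose j) := by
    rw [← add_pow]
    ring_nf
  rw [hx, Finset.sum_mul]
  conv_rhs => rw [← Finset.sum_range_reflect]
  refine Finset.sum_congr rfl fun j hj => ?_
  have hj' : j ≤ k := Nat.lt_succ_iff.mp (Finset.mem_range.mp hj)
  have e1 : k - (k + 1 - 1 - j) = j := by omega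
  have e2 : n - (k + 1 - 1 - j) = n - k + j := by omega
  have e3 : k + 1 - 1 - j = k - j := by omega
  rw [e1, e2, e3, Nat.choose_symm hj', ← h2 (n - k + j), pow_add, neg_pow]
  ring

/-- `∫_{ℤ_p} B_{k,n}(x) dμ₁(x) = C(n,k) ∑_{j=0}^{k} C(k,j)(−1)^{k−j} ∑_{l=0}^{n−j} C(n−j,l)(−1)^l B_l`. -/
theorem volkenborn_bernstein_eq_double_sum_bernoulli (p : ℕ) [Fact p.Prime] (n k : ℕ)
    (hkn : k ≤ n) :
    Filter.Tendsto
      (fun N : ℕ => (1 / (p : ℚ_[p]) ^ N) *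
        ∑ x ∈ Finset.range (p ^ N),
          (n.choose k : ℚ_[p]) * (x : ℚ_[p]) ^ k * (1 - (x : ℚ_[p])) ^ (n - k))
      Filter.atTop
      (nhds (((n.choose k : ℚ) * ∑ j ∈ Finset.range (k + 1),
        (k.choose j : ℚ) * (-1 : ℚ) ^ (k - j) *
          ∑ l ∈ Finset.range (n - j + 1),
            ((n - j).choose l : ℚ) * (-1 : ℚ) ^ l * bernoulli l : ℚ) : ℚ_[p])) := by
  set c : ℕ → ℕ → ℚ_[p] := fun j l =>
    (n.choose k : ℚ_[p]) * ((k.choose j : ℚ_[p]) * (-1) ^ (k - j)) *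
      (((n - j).choose l : ℚ_[p]) * (-1) ^ l) with hc
  have h1 : ∀ x : ℚ_[p], (n.choose k : ℚ_[p]) * x ^ k * (1 - x) ^ (n - k) =
      ∑ j ∈ range (k + 1), ∑ l ∈ range (n - j + 1), c j l * x ^ l := by
    intro x
    rw [mul_assoc, bernstein_expand n k hkn x]
    simp only [Finset.mul_sum]
    exact Finset.sum_congr rfl fun j _ => Finset.sum_congr rfl fun l _ => by rw [hc]; ring
  have key : ∀ N : ℕ, (1 / (p : ℚ_[p]) ^ N) *
      ∑ x ∈ range (p ^ N), (n.choose k : ℚ_[p]) * (x : ℚ_[p]) ^ k * (1 - (x : ℚ_[p])) ^ (n - k)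
      = ∑ j ∈ range (k + 1), ∑ l ∈ range (n - j + 1),
          c j l * ((1 / (p : ℚ_[p]) ^ N) * ∑ x ∈ range (p ^ N), (x : ℚ_[p]) ^ l) := by
    intro N
    simp only [h1, Finset.mul_sum]
    rw [Finset.sum_comm]
    refine Finset.sum_congr rfl fun j _ => ?_
    rw [Finset.sum_comm]
    refine Finset.sum_congr rfl fun l _ => ?_
    refine Finset.sum_congr rfl fun x _ => by ring
  have hval : ((((n.choose k : ℚ) * ∑ j ∈ Finset.range (k + 1),
        (k.choose j : ℚ) * (-1 : ℚ) ^ (k - j) *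
          ∑ l ∈ Finset.range (n - j + 1),
            ((n - j).choose l : ℚ) * (-1 : ℚ) ^ l * bernoulli l : ℚ)) : ℚ_[p])
      = ∑ j ∈ range (k + 1), ∑ l ∈ range (n - j + 1), c j l * ((bernoulli l : ℚ) : ℚ_[p]) := by
    push_cast
    simp only [Finset.mul_sum]
    exact Finset.sum_congr rfl fun j _ => Finset.sum_congr rfl fun l _ => by rw [hc]; ring
  rw [hval]
  refine Filter.Tendsto.congr (fun N => (key N).symm) ?_
  refine tendsto_finset_sum _ fun j _ => tendsto_finset_sum _ fun l _ => ?_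
  exact (volkenborn_monomial p l).const_mul _
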